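/- For all nonnegative integers t and n, d(4t, 4n+1) = d(2t, 2n) and d(4t, 4n+3) = d(2t, 2n+1), where d(t,n) = r(n+t) − r(n). -/

import Mathlib

/-- `r n` counts indices `j ≥ 0` with the `j`-th and `(j+1)`-st binary digits of `n` both `1`. -/
def r (n : ℕ) : ℕ :=
  ((Finset.range (n + 1)).filter (fun j => n.testBit j ∧ n.testBit (j + 1))).card

/-- `d t n = r (n + t) - r n` as an integer. -/
def d (t n : ℕ) : ℤ := (r (n + t) : ℤ) - (r n : ℤ)

lemma r_eq (n N : ℕ) (h : n + 1 ≤ N) :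
    r n = ((Finset.range N).filter (fun j => n.testBit j ∧ n.testBit (j + 1))).card := by
  unfold r
  congr 1
  apply Finset.ext
  intro j
  simp only [Finset.mem_filter, Finset.mem_range]
  constructor
  · rintro ⟨hj, h1, h2⟩; exact ⟨lt_of_lt_of_le hj h, h1, h2⟩
  · rintro ⟨hj, h1, h2⟩
    refine ⟨?_, h1, h2⟩
    by_contra hc
    push_neg at hc
    have hlt : n < 2 ^ j :=
      lt_of_lt_of_le (Nat.lt_two_pow_self (n := n)) (Nat.pow_le_pow_right (by norm_num) (by omega))
    exact absurd h1 (by simp [Nat.testBit_lt_two_pow hlt])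

lemma r_odd (k : ℕ) : r (2 * k + 1) = r k + k % 2 := by
  have key : ∀ j, (2 * k + 1).testBit (j + 1) = k.testBit j := by
    intro j
    rw [Nat.testBit_succ]
    congr 1
    omega
  have key0 : (2 * k + 1).testBit 0 = true := by
    simp [Nat.testBit_zero]
  have h1 : r (2 * k + 1)
      = ∑ j ∈ Finset.range (2 * k + 2),
          (if (2 * k + 1).testBit j ∧ (2 * k + 1).testBit (j + 1) then 1 else 0) := by
    rw [r]
    rw [Finset.card_filter]
  rw [h1, Finset.sum_range_succ']
  have h2 : r k
      = ∑ i ∈ Finset.range (2 * k + 1),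
          (if k.testBit i ∧ k.testBit (i + 1) then 1 else 0) := by
    rw [r_eq k (2 * k + 1) (by omega), Finset.card_filter]
  have h3 : ∀ i, (if (2 * k + 1).testBit (i + 1) ∧ (2 * k + 1).testBit (i + 1 + 1) then 1 else 0)
      = (if k.testBit i ∧ k.testBit (i + 1) then (1:ℕ) else 0) := by
    intro i
    simp [key]
  simp only [h3]
  rw [← h2, key0, key 0]
  rcases Nat.mod_two_eq_zero_or_one k with h | h <;>
    simp [Nat.testBit_zero, h]

theorem d_rec (t n : ℕ) :
    d (4 * t) (4 * n + 1) = d (2 * t) (2 * n) ∧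
    d (4 * t) (4 * n + 3) = d (2 * t) (2 * n + 1) := by
  have h1 : ∀ m, r (4 * m + 1) = r (2 * m) := by
    intro m
    have := r_odd (2 * m)
    have he : 2 * (2 * m) + 1 = 4 * m + 1 := by omega
    rw [he] at this
    omega
  have h3 : ∀ m, r (4 * m + 3) = r (2 * m + 1) + 1 := by
    intro m
    have := r_odd (2 * m + 1)
    have he : 2 * (2 * m + 1) + 1 = 4 * m + 3 := by omega
    rw [he] at this
    omega
  constructor
  · have e1 : 4 * n + 1 + 4 * t = 4 * (n + t) + 1 := by ring
    have e2 : 2 * n + 2 * t = 2 * (n + t) := by ring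
    simp only [d, e1, e2, h1]
  · have e1 : 4 * n + 3 + 4 * t = 4 * (n + t) + 3 := by ring
    have e2 : 2 * n + 1 + 2 * t = 2 * (n + t) + 1 := by ring
    simp only [d, e1, e2, h3]
    push_cast
    ring
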